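/- arXiv:1003.2047 — 2 statements merged into one kernel-verified Lean document; each statement's English description precedes it below -/
import Mathlib

section
/- If (α₁, α₂, α₃¹, …, α₃ʳ, α₄, α₅) is an admissible tuple in which the entries α₃¹, …, α₃ʳ are all ≥ 0, then F(α) does not belong to Diff₁. -/
/-- `Diff₁ = {(s, s, b·s + q) : -r ≤ s ≤ r, r-n ≤ q ≤ n-r}`, in coordinates recording the
coefficients of `D_t, D_y, D_v` in the Picard group. -/
def Diff1 (n r b : ℤ) : Set (ℤ × ℤ × ℤ) :=
  {p | ∃ s q : ℤ, -r ≤ s ∧ s ≤ r ∧ r - n ≤ q ∧ q ≤ n - r ∧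
    p = (s, s, b * s + q)}

/-- `Diff₂ = {(s, s-1, b·s + q) : 1-r ≤ s ≤ r, r-n+1 ≤ q ≤ n-r}`. -/
def Diff2 (n r b : ℤ) : Set (ℤ × ℤ × ℤ) :=
  {p | ∃ s q : ℤ, 1 - r ≤ s ∧ s ≤ r ∧ r - n + 1 ≤ q ∧ q ≤ n - r ∧
    p = (s, s - 1, b * s + q)}

/-- `Diff₃ = {(s, s+1, b·s + q) : -r ≤ s ≤ r-1, r-n ≤ q ≤ n-r-1}`. -/
def Diff3 (n r b : ℤ) : Set (ℤ × ℤ × ℤ) :=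
  {p | ∃ s q : ℤ, -r ≤ s ∧ s ≤ r - 1 ∧ r - n ≤ q ∧ q ≤ n - r - 1 ∧
    p = (s, s + 1, b * s + q)}

open Fin.NatCast in
/-- The predicate `P` on `ℤ/5` holds exactly on a cyclically consecutive block of length `m`
(starting at some index `i`). -/
def IsCyclicBlock (P : Fin 5 → Prop) (m : ℕ) : Prop :=
  ∃ i : Fin 5, ∀ k : Fin 5, P k ↔ ∃ d : ℕ, d < m ∧ k = i + (d : Fin 5)

/-- A tuple `(α₁, α₂, α₃¹, …, α₃ʳ, α₄, α₅)` (with `α₃ʲ = a3 j` for `1 ≤ j ≤ r`) is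
*admissible* if: the entries `α₃¹, …, α₃ʳ` are all `≤ -1` or all `≥ 0`; the set of negative
groups (group `3` being negative when all `α₃ʲ < 0`) is a cyclically consecutive block in
`(1,2,3,4,5)` of size exactly `2`, `3` or `5`; and if `α₁ < 0` then `α₁ ≤ -(n-r)`. -/
def Admissible (n r : ℤ) (α₁ α₂ α₄ α₅ : ℤ) (a3 : ℤ → ℤ) : Prop :=
  ((∀ j ∈ Finset.Icc 1 r, a3 j ≤ -1) ∨ (∀ j ∈ Finset.Icc 1 r, 0 ≤ a3 j)) ∧
  (∃ m ∈ ({2, 3, 5} : Set ℕ),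
    IsCyclicBlock ![α₁ < 0, α₂ < 0, ∀ j ∈ Finset.Icc 1 r, a3 j < 0, α₄ < 0, α₅ < 0] m) ∧
  (α₁ < 0 → α₁ ≤ -(n - r))

/-- `F(α) = (α₄ + Σ_{j=1}^r α₃ʲ, α₂ - α₅ + Σ_{j=1}^r α₃ʲ,
α₁ + b·α₃¹ + Σ_{j=2}^r (b - c_j)·α₃ʲ + α₅)`. -/
noncomputable def Fmap (r b : ℤ) (c : ℤ → ℤ) (α₁ α₂ α₄ α₅ : ℤ) (a3 : ℤ → ℤ) : ℤ × ℤ × ℤ :=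
  (α₄ + ∑ j ∈ Finset.Icc 1 r, a3 j,
   α₂ - α₅ + ∑ j ∈ Finset.Icc 1 r, a3 j,
   α₁ + b * a3 1 + (∑ j ∈ Finset.Icc 2 r, (b - c j) * a3 j) + α₅)


private lemma block_cases_aux (P : Fin 5 → Prop) (m : ℕ) (hm : m = 2 ∨ m = 3 ∨ m = 5)
    (hb : IsCyclicBlock P m) (h2 : ¬ P 2) :
    (P 1 ∧ ¬P 3 ∧ ¬P 4) ∨ (¬P 1 ∧ P 3 ∧ P 4) ∨ (P 0 ∧ ¬P 3 ∧ P 4) := by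
  obtain ⟨i, hbl⟩ := hb
  simp only [hbl] at h2 ⊢
  rcases hm with rfl | rfl | rfl <;> fin_cases i <;> revert h2 <;> decide

/-- If `(α₁, α₂, α₃¹, …, α₃ʳ, α₄, α₅)` is an admissible tuple in which the
entries `α₃¹, …, α₃ʳ` are all `≥ 0`, then `F(α) ∉ Diff₁`. -/
theorem fmap_not_in_diff1_of_a3_nonneg (n r b : ℤ) (hr : 1 ≤ r) (hrn : r ≤ n - 1) (hb : 0 ≤ b)
    (c : ℤ → ℤ) (hc : ∀ j ∈ Finset.Icc (2 : ℤ) r, 0 ≤ c j)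
    (α₁ α₂ α₄ α₅ : ℤ) (a3 : ℤ → ℤ)
    (hadm : Admissible n r α₁ α₂ α₄ α₅ a3)
    (hpos : ∀ j ∈ Finset.Icc (1 : ℤ) r, 0 ≤ a3 j) :
    Fmap r b c α₁ α₂ α₄ α₅ a3 ∉ Diff1 n r b := by
  rintro ⟨s, q, hs1, hs2, hq1, hq2, heq⟩
  obtain ⟨-, ⟨m, hm, hblk⟩, hα₁n⟩ := hadm
  have h1r : (1:ℤ) ∈ Finset.Icc 1 r := Finset.mem_Icc.mpr ⟨le_refl 1, hr⟩
  have hm' : m = 2 ∨ m = 3 ∨ m = 5 := by simpa using hm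
  have hP2 : ¬ (![α₁ < 0, α₂ < 0, ∀ j ∈ Finset.Icc 1 r, a3 j < 0, α₄ < 0, α₅ < 0] (2 : Fin 5)) := by
    intro h
    have h' : ∀ j ∈ Finset.Icc (1:ℤ) r, a3 j < 0 := h
    exact absurd (hpos 1 h1r) (not_le.mpr (h' 1 h1r))
  have hcases := block_cases_aux _ m hm' hblk hP2
  have hIoc : Finset.Ioc (1:ℤ) r = Finset.Icc 2 r := by ext x; simp; omega
  have hsplit : ∑ j ∈ Finset.Icc (1:ℤ) r, a3 j = a3 1 + ∑ j ∈ Finset.Icc 2 r, a3 j := by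
    rw [Finset.Icc_eq_cons_Ioc hr, Finset.sum_cons, hIoc]
  have hsub : ∑ j ∈ Finset.Icc (2:ℤ) r, (b - c j) * a3 j
      = b * (∑ j ∈ Finset.Icc (2:ℤ) r, a3 j) - ∑ j ∈ Finset.Icc (2:ℤ) r, c j * a3 j := by
    rw [Finset.mul_sum, ← Finset.sum_sub_distrib]
    exact Finset.sum_congr rfl fun j _ => by ring
  set S2 := ∑ j ∈ Finset.Icc (2:ℤ) r, a3 j with hS2
  set T := ∑ j ∈ Finset.Icc (2:ℤ) r, c j * a3 j with hT
  have hS2n : 0 ≤ S2 := Finset.sum_nonneg fun j hj => by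
    refine hpos j (Finset.mem_Icc.mpr ?_)
    have := Finset.mem_Icc.mp hj; omega
  have hTn : 0 ≤ T := Finset.sum_nonneg fun j hj => by
    refine mul_nonneg (hc j hj) (hpos j (Finset.mem_Icc.mpr ?_))
    have := Finset.mem_Icc.mp hj; omega
  have ha1n : 0 ≤ a3 1 := hpos 1 h1r
  simp only [Fmap, Prod.mk.injEq, hsplit, hsub] at heq
  obtain ⟨e1, e2, e3⟩ := heq
  rcases hcases with ⟨hp1, hp3, hp4⟩ | ⟨hp1, hp3, hp4⟩ | ⟨hp0, hp3, hp4⟩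
  · have h2 : α₂ < 0 := hp1
    have h3 : ¬ (α₄ < 0) := hp3
    have h4 : ¬ (α₅ < 0) := hp4
    rw [not_lt] at h3 h4
    linarith
  · have h2 : ¬ (α₂ < 0) := hp1
    have h3 : α₄ < 0 := hp3
    have h4 : α₅ < 0 := hp4
    rw [not_lt] at h2
    linarith
  · have h0 : α₁ < 0 := hp0
    have h3 : ¬ (α₄ < 0) := hp3
    have h4 : α₅ < 0 := hp4
    rw [not_lt] at h3
    have hα₁ : α₁ ≤ -(n - r) := hα₁n h0
    have hbs : b * s = b * α₄ + b * a3 1 + b * S2 := by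
      rw [← e1]; ring
    have hba4 : 0 ≤ b * α₄ := mul_nonneg hb h3
    linarith
end

section
/- For every admissible tuple (α₁, α₂, α₃¹, …, α₃ʳ, α₄, α₅), the point F(α) does not belong to Diff₁ ∪ Diff₂ ∪ Diff₃. (This is the arithmetic core of the proof that all differences of elements of Col are acyclic line bundles, hence that Col gives a strongly exceptional collection.) -/
lemma block_cases (P : Fin 5 → Prop) (m : ℕ) (hm : m = 2 ∨ m = 3 ∨ m = 5)
    (h : IsCyclicBlock P m) :
    (P 2 ∧ P 3) ∨ (P 3 ∧ P 4 ∧ ¬ P 1) ∨ (P 0 ∧ P 4 ∧ ¬ P 2 ∧ ¬ P 3) ∨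
      (P 1 ∧ ¬ P 3 ∧ ¬ P 4 ∧ (P 2 ∨ P 0)) := by
  obtain ⟨i, hb⟩ := h
  fin_cases i <;> rcases hm with rfl | rfl | rfl <;> simp only [hb] <;> decide

/-- For every admissible tuple `(α₁, α₂, α₃¹, …, α₃ʳ, α₄, α₅)`, the point
`F(α)` does not belong to `Diff₁ ∪ Diff₂ ∪ Diff₃`. This is the arithmetic core of the proof
that all differences of elements of `Col` are acyclic line bundles, hence that `Col` gives a
strongly exceptional collection. -/
theorem fmap_not_in_diff (n r b : ℤ) (hr : 1 ≤ r) (hrn : r ≤ n - 1) (hb : 0 ≤ b)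
    (c : ℤ → ℤ) (hc : ∀ j ∈ Finset.Icc (2 : ℤ) r, 0 ≤ c j)
    (α₁ α₂ α₄ α₅ : ℤ) (a3 : ℤ → ℤ)
    (hadm : Admissible n r α₁ α₂ α₄ α₅ a3) :
    Fmap r b c α₁ α₂ α₄ α₅ a3 ∉ Diff1 n r b ∪ Diff2 n r b ∪ Diff3 n r b := by
  obtain ⟨h3sign, ⟨m, hm, hblk⟩, h1b⟩ := hadm
  have hm' : m = 2 ∨ m = 3 ∨ m = 5 := by simpa using hm
  have hcase := block_cases _ m hm' hblk
  set S := ∑ j ∈ Finset.Icc (1:ℤ) r, a3 j with hSdef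
  set T := ∑ j ∈ Finset.Icc (2:ℤ) r, c j * a3 j with hTdef
  -- third coordinate identity
  have hins : Finset.Icc (1:ℤ) r = insert 1 (Finset.Icc 2 r) := by
    ext x; simp only [Finset.mem_Icc, Finset.mem_insert]; omega
  have hSsplit : S = a3 1 + ∑ j ∈ Finset.Icc (2:ℤ) r, a3 j := by
    rw [hSdef, hins, Finset.sum_insert (by simp)]
  have hthird : α₁ + b * a3 1 + (∑ j ∈ Finset.Icc 2 r, (b - c j) * a3 j) + α₅
      = α₁ + α₅ + b * S - T := by
    have h2 : ∑ j ∈ Finset.Icc (2:ℤ) r, (b - c j) * a3 j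
        = b * (∑ j ∈ Finset.Icc (2:ℤ) r, a3 j) - T := by
      rw [hTdef, Finset.mul_sum, ← Finset.sum_sub_distrib]
      exact Finset.sum_congr rfl fun j _ => by ring
    rw [h2, hSsplit]; ring
  -- sign facts
  have hnonneg : ¬ (∀ j ∈ Finset.Icc (1:ℤ) r, a3 j < 0) →
      ∀ j ∈ Finset.Icc (1:ℤ) r, 0 ≤ a3 j := by
    intro hn
    rcases h3sign with h | h
    · exact absurd (fun j hj => lt_of_le_of_lt (h j hj) (by norm_num)) hn
    · exact h
  have hcard : ((Finset.Icc (1:ℤ) r).card : ℤ) = r := by rw [Int.card_Icc]; omega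
  have hSneg : (∀ j ∈ Finset.Icc (1:ℤ) r, a3 j < 0) → S ≤ -r := by
    intro h
    calc S ≤ ∑ _j ∈ Finset.Icc (1:ℤ) r, (-1 : ℤ) :=
          Finset.sum_le_sum fun j hj => by have := h j hj; omega
      _ = -r := by rw [Finset.sum_const, nsmul_eq_mul, hcard]; ring
  have hSpos : (∀ j ∈ Finset.Icc (1:ℤ) r, 0 ≤ a3 j) → 0 ≤ S :=
    fun h => Finset.sum_nonneg fun j hj => h j hj
  have hsub : ∀ j ∈ Finset.Icc (2:ℤ) r, j ∈ Finset.Icc (1:ℤ) r := by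
    intro j hj; simp only [Finset.mem_Icc] at *; omega
  have hTpos : (∀ j ∈ Finset.Icc (1:ℤ) r, 0 ≤ a3 j) → 0 ≤ T :=
    fun h => Finset.sum_nonneg fun j hj => mul_nonneg (hc j hj) (h j (hsub j hj))
  -- main argument
  intro hmem
  rcases hmem with (hd | hd) | hd <;>
    obtain ⟨s, q, hs1, hs2, hq1, hq2, heq⟩ := hd <;>
    simp only [Fmap, Prod.mk.injEq, ← hSdef] at heq <;>
    obtain ⟨e1, e2, e3⟩ := heq <;>
    rw [hthird] at e3
  -- Diff1 : α₂ - α₅ = α₄, q = α₁ + α₅ - b*α₄ - T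
  · have hqe : q = α₁ + α₅ - b * α₄ - T := by linear_combination b * e1 - e3
    rcases hcase with ⟨hP2, hP3⟩ | ⟨hP3, hP4, hP1'⟩ | ⟨hP0, hP4, hP2', hP3'⟩ |
        ⟨hP1, hP3', hP4', _⟩
    · have hP3' : α₄ < 0 := hP3
      have := hSneg hP2; linarith
    · have hP3' : α₄ < 0 := hP3
      have hP4' : α₅ < 0 := hP4
      have hP1'' : ¬ α₂ < 0 := hP1'
      have : 0 ≤ α₂ := not_lt.mp hP1''
      linarith
    · have hP0' : α₁ < 0 := hP0
      have hP4' : α₅ < 0 := hP4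
      have ha4 : ¬ α₄ < 0 := hP3'
      have hT : 0 ≤ T := hTpos (hnonneg hP2')
      have hba : 0 ≤ b * α₄ := mul_nonneg hb (not_lt.mp ha4)
      have := h1b hP0'
      linarith
    · have hP1'' : α₂ < 0 := hP1
      have ha4 : ¬ α₄ < 0 := hP3'
      have ha5 : ¬ α₅ < 0 := hP4'
      have h4 : 0 ≤ α₄ := not_lt.mp ha4
      have h5 : 0 ≤ α₅ := not_lt.mp ha5
      linarith
  -- Diff2 : α₂ - α₅ = α₄ - 1, q = α₁ + α₅ - b*α₄ - T
  · have hqe : q = α₁ + α₅ - b * α₄ - T := by linear_combination b * e1 - e3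
    rcases hcase with ⟨hP2, hP3⟩ | ⟨hP3, hP4, hP1'⟩ | ⟨hP0, hP4, hP2', hP3'⟩ |
        ⟨hP1, hP3', hP4', hP20⟩
    · have hP3' : α₄ < 0 := hP3
      have := hSneg hP2; linarith
    · have hP3' : α₄ < 0 := hP3
      have hP4' : α₅ < 0 := hP4
      have : 0 ≤ α₂ := not_lt.mp hP1'
      linarith
    · have hP0' : α₁ < 0 := hP0
      have hP4' : α₅ < 0 := hP4
      have hT : 0 ≤ T := hTpos (hnonneg hP2')
      have hba : 0 ≤ b * α₄ := mul_nonneg hb (not_lt.mp (hP3' : ¬ α₄ < 0))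
      have := h1b hP0'
      linarith
    · have hP1'' : α₂ < 0 := hP1
      have h4 : 0 ≤ α₄ := not_lt.mp (hP3' : ¬ α₄ < 0)
      have h5 : 0 ≤ α₅ := not_lt.mp (hP4' : ¬ α₅ < 0)
      have h40 : α₄ = 0 := by linarith
      have h50 : α₅ = 0 := by linarith
      by_cases hP2 : ∀ j ∈ Finset.Icc (1:ℤ) r, a3 j < 0
      · have := hSneg hP2; linarith
      · have hP0' : α₁ < 0 := by
          rcases hP20 with hP2' | hP0
          · exact absurd (hP2' : ∀ j ∈ Finset.Icc (1:ℤ) r, a3 j < 0) hP2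
          · exact hP0
        have hT : 0 ≤ T := hTpos (hnonneg hP2)
        have := h1b hP0'
        have hba : b * α₄ = 0 := by rw [h40]; ring
        linarith
  -- Diff3 : α₂ - α₅ = α₄ + 1, q = α₁ + α₅ - b*α₄ - T
  · have hqe : q = α₁ + α₅ - b * α₄ - T := by linear_combination b * e1 - e3
    rcases hcase with ⟨hP2, hP3⟩ | ⟨hP3, hP4, hP1'⟩ | ⟨hP0, hP4, hP2', hP3'⟩ |
        ⟨hP1, hP3', hP4', _⟩
    · have hP3' : α₄ < 0 := hP3
      have := hSneg hP2; linarith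
    · have hP3' : α₄ < 0 := hP3
      have hP4' : α₅ < 0 := hP4
      have : 0 ≤ α₂ := not_lt.mp hP1'
      linarith
    · have hP0' : α₁ < 0 := hP0
      have hP4' : α₅ < 0 := hP4
      have hT : 0 ≤ T := hTpos (hnonneg hP2')
      have hba : 0 ≤ b * α₄ := mul_nonneg hb (not_lt.mp (hP3' : ¬ α₄ < 0))
      have := h1b hP0'
      linarith
    · have hP1'' : α₂ < 0 := hP1
      have h4 : 0 ≤ α₄ := not_lt.mp (hP3' : ¬ α₄ < 0)
      have h5 : 0 ≤ α₅ := not_lt.mp (hP4' : ¬ α₅ < 0)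
      linarith
end
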